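/- Let $G = \mathbb{Z}^n$ with standard basis $e_1, \ldots, e_n$, let $d_1, \ldots, d_n \ge 1$ be integers, and set $d = d_1 \cdots d_n$. Let $H \le G$ be the subgroup with basis $f_i = d_i e_i$, and let $\iota \colon H \to G$ be the inclusion. Then for each $0 \le q \le n$ there exists a unique group homomorphism $T \colon \Lambda^q(G) \to \Lambda^q(H)$ such that $\Lambda^q(\iota) \circ T = d \cdot \mathrm{id}$ and $T \circ \Lambda^q(\iota) = d \cdot \mathrm{id}$; explicitly, $T(e_{i_1} \wedge \cdots \wedge e_{i_q}) = \frac{d}{d_{i_1} \cdots d_{i_q}} f_{i_1} \wedge \cdots \wedge f_{i_q}$ for $i_1 < \cdots < i_q$. -/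

import Mathlib

open ExteriorAlgebra


namespace Stmt5Aux

variable (n q : ℕ)

/-- Standard basis wedge. -/
noncomputable def W (idx : Fin q → Fin n) : ExteriorAlgebra ℤ (Fin n → ℤ) :=
  ιMulti ℤ q (fun j => Pi.single (idx j) (1 : ℤ))

/-- The coordinate alternating form `v ↦ det (v j (idx k))`. -/
noncomputable def detA (idx : Fin q → Fin n) : (Fin n → ℤ) [⋀^Fin q]→ₗ[ℤ] ℤ :=
  (Matrix.detRowAlternating).compLinearMap (LinearMap.funLeft ℤ ℤ idx)

lemma detA_apply (idx : Fin q → Fin n) (v : Fin q → Fin n → ℤ) :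
    detA n q idx v = Matrix.det (Matrix.of fun j k => v j (idx k)) := rfl

open scoped Classical in
noncomputable def F : Finset (Fin q → Fin n) :=
  Finset.univ.filter (fun idx => StrictMono idx)

lemma mem_F {idx : Fin q → Fin n} : idx ∈ F n q ↔ StrictMono idx := by
  simp [F]

/-- The main family of alternating maps. -/
noncomputable def A (c : (Fin q → Fin n) → ℤ) :
    (Fin n → ℤ) [⋀^Fin q]→ₗ[ℤ] ExteriorAlgebra ℤ (Fin n → ℤ) :=
  ∑ idx ∈ F n q,
    (LinearMap.toSpanSingleton ℤ _ (c idx • W n q idx)).compAlternatingMap (detA n q idx)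

lemma altSum_apply {N : Type*} [AddCommGroup N] [Module ℤ N]
    {α : Type*} (s : Finset α) (f : α → ((Fin n → ℤ) [⋀^Fin q]→ₗ[ℤ] N))
    (v : Fin q → Fin n → ℤ) : (∑ a ∈ s, f a) v = ∑ a ∈ s, f a v := by
  classical
  induction s using Finset.induction with
  | empty => simp
  | insert _ _ h ih => simp [Finset.sum_insert h, ih]

lemma A_apply (c : (Fin q → Fin n) → ℤ) (v : Fin q → Fin n → ℤ) :
    A n q c v = ∑ idx ∈ F n q, detA n q idx v • c idx • W n q idx := by
  rw [A, altSum_apply]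
  simp [LinearMap.toSpanSingleton_apply, smul_smul, mul_comm]

lemma A_eval (c : (Fin q → Fin n) → ℤ) (u : Fin q → Fin n) (hu : StrictMono u) :
    A n q c (fun j => Pi.single (u j) (1 : ℤ)) = c u • W n q u := by
  classical
  rw [A_apply]
  rw [Finset.sum_eq_single u]
  · have h1 : (Matrix.of fun j k => (Pi.single (u j) (1 : ℤ) : Fin n → ℤ) (u k)) = (1 : Matrix (Fin q) (Fin q) ℤ) := by
      ext j k
      by_cases h : j = k
      · subst h; simp
      · have : u k ≠ u j := fun hh => h (hu.injective hh).symm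
        simp [Matrix.one_apply, Pi.single_apply, this, h]
    rw [detA_apply, h1, Matrix.det_one, one_smul]
  · intro idx hidx hne
    have hidx' : StrictMono idx := (mem_F n q).1 hidx
    haveI : WellFoundedLT (Fin q) := inferInstance
    have hran : Set.range u ≠ Set.range idx := by
      intro h
      exact hne (((StrictMono.range_inj (f := u) (g := idx) hu hidx').1 h).symm)
    -- find j with u j ∉ range idx
    have hcard : (Finset.univ.image u).card = (Finset.univ.image idx).card := by
      rw [Finset.card_image_of_injective _ hu.injective,
        Finset.card_image_of_injective _ hidx'.injective]
    have hsub : ¬ (Finset.univ.image u ⊆ Finset.univ.image idx) := by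
      intro hss
      have := Finset.eq_of_subset_of_card_le hss (le_of_eq hcard.symm)
      apply hran
      rw [← Set.image_univ, ← Set.image_univ, ← Finset.coe_univ, ← Finset.coe_image,
        ← Finset.coe_image, this]
    obtain ⟨a, ha, hna⟩ := Finset.not_subset.1 hsub
    obtain ⟨j, _, rfl⟩ := Finset.mem_image.1 ha
    have hrow : ∀ k, (Pi.single (u j) (1 : ℤ) : Fin n → ℤ) (idx k) = 0 := by
      intro k
      have : idx k ≠ u j := fun hh => hna (Finset.mem_image.2 ⟨k, Finset.mem_univ _, hh⟩)
      simp [Pi.single_apply, this]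
    rw [detA_apply, Matrix.det_eq_zero_of_row_eq_zero j (fun k => hrow k), zero_smul]
  · intro h
    exact absurd ((mem_F n q).2 hu) h

/-- Two alternating maps agreeing on strictly monotone basis tuples agree. -/
lemma alt_ext {N : Type*} [AddCommGroup N] [Module ℤ N]
    {f g : (Fin n → ℤ) [⋀^Fin q]→ₗ[ℤ] N}
    (h : ∀ u : Fin q → Fin n, StrictMono u →
      (f fun j => Pi.single (u j) (1 : ℤ)) = g fun j => Pi.single (u j) (1 : ℤ)) : f = g := by
  classical
  refine Module.Basis.ext_alternating (Pi.basisFun ℤ (Fin n)) (fun v hv => ?_)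
  set s : Finset (Fin n) := Finset.univ.image v with hs_def
  have hs : s.card = q := by
    rw [hs_def, Finset.card_image_of_injective _ hv, Finset.card_univ, Fintype.card_fin]
  have hmem : ∀ k, v k ∈ s := fun k => Finset.mem_image_of_mem _ (Finset.mem_univ k)
  set g0 : Fin q → Fin q := fun k => (s.orderIsoOfFin hs).symm ⟨v k, hmem k⟩ with hg0_def
  have hg0 : Function.Injective g0 := by
    intro a b hab
    apply hv
    have := congrArg (fun t => ((s.orderIsoOfFin hs) t : Fin n)) hab
    simpa [hg0_def] using this
  let σ : Equiv.Perm (Fin q) := Equiv.ofBijective g0 (Finite.injective_iff_bijective.1 hg0)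
  have hemb : StrictMono (fun k => (s.orderEmbOfFin hs) k) := (s.orderEmbOfFin hs).strictMono
  have hvσ : (fun k => (Pi.basisFun ℤ (Fin n)) (v k))
      = (fun k => (Pi.basisFun ℤ (Fin n)) ((s.orderEmbOfFin hs) k)) ∘ σ := by
    funext k
    simp only [Function.comp_apply]
    congr 1
    show v k = s.orderEmbOfFin hs (g0 k)
    rw [← Finset.coe_orderIsoOfFin_apply]
    simp [hg0_def]
  rw [hvσ, AlternatingMap.map_perm, AlternatingMap.map_perm]
  congr 1
  simpa only [Pi.basisFun_apply] using h _ hemb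

lemma expand : (ιMulti ℤ q : (Fin n → ℤ) [⋀^Fin q]→ₗ[ℤ] _) = A n q (fun _ => 1) := by
  refine alt_ext n q (fun u hu => ?_)
  rw [A_eval n q _ u hu, one_smul]
  rfl

lemma mem_span_W {z : ExteriorAlgebra ℤ (Fin n → ℤ)} (hz : z ∈ ⋀[ℤ]^q (Fin n → ℤ)) :
    z ∈ Submodule.span ℤ (W n q '' {u | StrictMono u}) := by
  rw [← ιMulti_span_fixedDegree] at hz
  refine Submodule.span_le.2 ?_ hz
  rintro _ ⟨v, rfl⟩
  have hv : ιMulti ℤ q v = A n q (fun _ => 1) v := by rw [← expand]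
  rw [hv, A_apply]
  exact Submodule.sum_mem _ fun idx hidx =>
    Submodule.smul_mem _ _ (Submodule.smul_mem _ _
      (Submodule.subset_span ⟨idx, (mem_F n q).1 hidx, rfl⟩))

open scoped Classical in
noncomputable def c0 (d : Fin n → ℤ) (idx : Fin q → Fin n) : ℤ :=
  ∏ i ∈ (Finset.univ.image idx)ᶜ, d i

lemma c0_mul (d : Fin n → ℤ) (idx : Fin q → Fin n) (h : Function.Injective idx) :
    (∏ j, d (idx j)) * c0 n q d idx = ∏ i, d i := by
  classical
  rw [c0, show ∏ j, d (idx j) = ∏ i ∈ Finset.univ.image idx, d i from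
    (Finset.prod_image (fun a _ b _ hab => h hab)).symm]
  exact Finset.prod_mul_prod_compl _ _

lemma prodd_ne (d : Fin n → ℤ) (hd : ∀ i, 1 ≤ d i) (idx : Fin q → Fin n) :
    (∏ j, d (idx j)) ≠ 0 :=
  (Finset.prod_pos (fun j _ => lt_of_lt_of_le zero_lt_one (hd (idx j)))).ne'

lemma c0_div (d : Fin n → ℤ) (hd : ∀ i, 1 ≤ d i) (idx : Fin q → Fin n)
    (h : Function.Injective idx) :
    (∏ i, d i) / ∏ j, d (idx j) = c0 n q d idx := by
  rw [← c0_mul n q d idx h, Int.mul_ediv_cancel_left _ (prodd_ne n q d hd idx)]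

end Stmt5Aux

open Stmt5Aux

/-- Lemma on exterior powers: with `G = ℤⁿ`, `H ≤ G` the subgroup with basis
`fᵢ = dᵢ eᵢ` (modelled as `G` itself with inclusion `ι(eᵢ) = dᵢ eᵢ`), and
`D = d₁ ⋯ dₙ`, there is a unique `T : Λ^q(G) → Λ^q(H)` with
`Λ^q(ι) ∘ T = D·id = T ∘ Λ^q(ι)`; explicitly
`T(e_{i₁} ∧ ⋯ ∧ e_{i_q}) = (D / (d_{i₁} ⋯ d_{i_q})) f_{i₁} ∧ ⋯ ∧ f_{i_q}`.
Here `Lι` is the map `Λ^q(ι)`, characterized by commuting with the inclusion of the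
exterior power into the exterior algebra. -/
theorem stmt_5 (n q : ℕ) (hq : q ≤ n) (d : Fin n → ℤ) (hd : ∀ i, 1 ≤ d i)
    (ι : (Fin n → ℤ) →ₗ[ℤ] (Fin n → ℤ)) (hι : ∀ x i, ι x i = d i * x i)
    (Lι : ↥(⋀[ℤ]^q (Fin n → ℤ)) →ₗ[ℤ] ↥(⋀[ℤ]^q (Fin n → ℤ)))
    (hLι : (⋀[ℤ]^q (Fin n → ℤ)).subtype ∘ₗ Lι
        = (ExteriorAlgebra.map ι).toLinearMap ∘ₗ (⋀[ℤ]^q (Fin n → ℤ)).subtype) :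
    ∃! T : ↥(⋀[ℤ]^q (Fin n → ℤ)) →ₗ[ℤ] ↥(⋀[ℤ]^q (Fin n → ℤ)),
      (Lι ∘ₗ T = (∏ i, d i) • LinearMap.id ∧ T ∘ₗ Lι = (∏ i, d i) • LinearMap.id) ∧
      ∀ idx : Fin q → Fin n, StrictMono idx →
        T ⟨ExteriorAlgebra.ιMulti ℤ q (fun j => Pi.single (idx j) (1 : ℤ)),
            ExteriorAlgebra.ιMulti_range ℤ q (Set.mem_range_self _)⟩
          = ((∏ i, d i) / ∏ j, d (idx j)) •
            ⟨ExteriorAlgebra.ιMulti ℤ q (fun j => Pi.single (idx j) (1 : ℤ)),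
              ExteriorAlgebra.ιMulti_range ℤ q (Set.mem_range_self _)⟩ := by
  classical
  have hι1 : ∀ i : Fin n, ι (Pi.single i 1) = d i • (Pi.single i (1 : ℤ) : Fin n → ℤ) := by
    intro i; funext j
    rw [hι]
    by_cases h : j = i
    · subst h; simp
    · simp [Pi.single_apply, h]
  have hmapW : ∀ idx : Fin q → Fin n,
      ExteriorAlgebra.map ι (W n q idx) = (∏ j, d (idx j)) • W n q idx := by
    intro idx
    rw [W, map_apply_ιMulti]
    have h2 : (⇑ι ∘ fun j => (Pi.single (idx j) (1 : ℤ) : Fin n → ℤ))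
        = fun j => d (idx j) • (Pi.single (idx j) (1 : ℤ) : Fin n → ℤ) := by
      funext j; exact hι1 (idx j)
    rw [h2]
    exact (ιMulti ℤ q).toMultilinearMap.map_smul_univ _ _
  have hdetAι : ∀ (idx : Fin q → Fin n) (v : Fin q → Fin n → ℤ),
      detA n q idx (⇑ι ∘ v) = (∏ j, d (idx j)) * detA n q idx v := by
    intro idx v
    rw [detA_apply, detA_apply]
    have h3 : (Matrix.of fun j k => ((⇑ι ∘ v) j) (idx k))
        = Matrix.of fun j k => (fun kk => d (idx kk)) k * (Matrix.of fun j k => v j (idx k)) j k := by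
      ext j k
      simp [hι]
    rw [h3, Matrix.det_mul_row]
  let Afin := A n q (c0 n q d)
  let Tfull : ExteriorAlgebra ℤ (Fin n → ℤ) →ₗ[ℤ] ExteriorAlgebra ℤ (Fin n → ℤ) :=
    liftAlternating (Function.update
      (fun i => (0 : (Fin n → ℤ) [⋀^Fin i]→ₗ[ℤ] ExteriorAlgebra ℤ (Fin n → ℤ))) q Afin)
  have hTfull : ∀ v : Fin q → Fin n → ℤ, Tfull (ιMulti ℤ q v) = Afin v := by
    intro v
    show liftAlternating _ (ιMulti ℤ q v) = _
    rw [liftAlternating_apply_ιMulti, Function.update_self]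
  have hmem : ∀ z ∈ ⋀[ℤ]^q (Fin n → ℤ), Tfull z ∈ ⋀[ℤ]^q (Fin n → ℤ) := by
    intro z hz
    rw [← ιMulti_span_fixedDegree] at hz
    induction hz using Submodule.span_induction with
    | mem x hx =>
      obtain ⟨v, rfl⟩ := hx
      rw [hTfull, A_apply]
      exact Submodule.sum_mem _ fun idx hidx =>
        Submodule.smul_mem _ _ (Submodule.smul_mem _ _
          (ιMulti_range ℤ q (Set.mem_range_self _)))
    | zero => simp
    | add x y _ _ hx hy => rw [map_add]; exact Submodule.add_mem _ hx hy
    | smul a x _ hx => rw [map_smul]; exact Submodule.smul_mem _ _ hx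
  let T : ↥(⋀[ℤ]^q (Fin n → ℤ)) →ₗ[ℤ] ↥(⋀[ℤ]^q (Fin n → ℤ)) :=
    LinearMap.codRestrict _ (Tfull ∘ₗ (⋀[ℤ]^q (Fin n → ℤ)).subtype) (fun x => hmem _ x.2)
  have hTval : ∀ x : ↥(⋀[ℤ]^q (Fin n → ℤ)),
      (T x : ExteriorAlgebra ℤ (Fin n → ℤ)) = Tfull x := fun _ => rfl
  have hsub := Submodule.injective_subtype (⋀[ℤ]^q (Fin n → ℤ))
  have hkey1 : ∀ z ∈ ⋀[ℤ]^q (Fin n → ℤ),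
      ExteriorAlgebra.map ι (Tfull z) = (∏ i, d i) • z := by
    intro z hz
    rw [← ιMulti_span_fixedDegree] at hz
    induction hz using Submodule.span_induction with
    | mem x hx =>
      obtain ⟨v, rfl⟩ := hx
      rw [hTfull]
      show ExteriorAlgebra.map ι (A n q (c0 n q d) v) = _
      rw [A_apply]
      have hR : ιMulti ℤ q v = A n q (fun _ => 1) v := by rw [← expand]
      rw [map_sum, hR, A_apply, Finset.smul_sum]
      refine Finset.sum_congr rfl (fun idx hidx => ?_)
      rw [map_smul, map_smul, hmapW idx]
      simp only [smul_smul]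
      congr 1
      rw [mul_one, ← c0_mul n q d idx ((mem_F n q).1 hidx).injective]
      ring
    | zero => simp
    | add x y _ _ hx hy => rw [map_add, map_add, hx, hy, smul_add]
    | smul a x _ hx => rw [map_smul, map_smul, hx, smul_comm]
  have hkey2 : ∀ z ∈ ⋀[ℤ]^q (Fin n → ℤ),
      Tfull (ExteriorAlgebra.map ι z) = (∏ i, d i) • z := by
    intro z hz
    rw [← ιMulti_span_fixedDegree] at hz
    induction hz using Submodule.span_induction with
    | mem x hx =>
      obtain ⟨v, rfl⟩ := hx
      rw [map_apply_ιMulti, hTfull]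
      show A n q (c0 n q d) (⇑ι ∘ v) = _
      rw [A_apply]
      have hR : ιMulti ℤ q v = A n q (fun _ => 1) v := by rw [← expand]
      rw [hR, A_apply, Finset.smul_sum]
      refine Finset.sum_congr rfl (fun idx hidx => ?_)
      rw [hdetAι idx v]
      simp only [smul_smul]
      congr 1
      rw [mul_one, ← c0_mul n q d idx ((mem_F n q).1 hidx).injective]
      ring
    | zero => simp
    | add x y _ _ hx hy => rw [map_add, map_add, hx, hy, smul_add]
    | smul a x _ hx => rw [map_smul, map_smul, hx, smul_comm]
  have h1 : Lι ∘ₗ T = (∏ i, d i) • LinearMap.id := by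
    apply LinearMap.ext; intro x
    apply hsub
    have e1 := LinearMap.congr_fun hLι (T x)
    simp only [LinearMap.comp_apply, Submodule.coe_subtype, AlgHom.toLinearMap_apply] at e1
    simp only [LinearMap.comp_apply, LinearMap.smul_apply, LinearMap.id_apply,
      Submodule.coe_subtype, SetLike.val_smul]
    rw [e1, hTval, hkey1 _ x.2]
  have h2 : T ∘ₗ Lι = (∏ i, d i) • LinearMap.id := by
    apply LinearMap.ext; intro x
    apply hsub
    have e1 := LinearMap.congr_fun hLι x
    simp only [LinearMap.comp_apply, Submodule.coe_subtype, AlgHom.toLinearMap_apply] at e1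
    simp only [LinearMap.comp_apply, LinearMap.smul_apply, LinearMap.id_apply,
      Submodule.coe_subtype, SetLike.val_smul]
    rw [hTval, e1, hkey2 _ x.2]
  have hprop3 : ∀ idx : Fin q → Fin n, StrictMono idx →
      T ⟨ExteriorAlgebra.ιMulti ℤ q (fun j => Pi.single (idx j) (1 : ℤ)),
          ExteriorAlgebra.ιMulti_range ℤ q (Set.mem_range_self _)⟩
        = ((∏ i, d i) / ∏ j, d (idx j)) •
          ⟨ExteriorAlgebra.ιMulti ℤ q (fun j => Pi.single (idx j) (1 : ℤ)),
            ExteriorAlgebra.ιMulti_range ℤ q (Set.mem_range_self _)⟩ := by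
    intro idx hidx
    apply hsub
    simp only [Submodule.coe_subtype, SetLike.val_smul]
    rw [hTval]
    show Tfull (ιMulti ℤ q fun j => Pi.single (idx j) (1 : ℤ)) = _
    rw [hTfull]
    show A n q (c0 n q d) (fun j => Pi.single (idx j) (1 : ℤ)) = _
    rw [A_eval n q _ idx hidx, c0_div n q d hd idx hidx.injective]
    rfl
  refine ⟨T, ⟨⟨h1, h2⟩, hprop3⟩, ?_⟩
  rintro T' ⟨⟨-, -⟩, h3'⟩
  have hspan : Submodule.span ℤ {x : ↥(⋀[ℤ]^q (Fin n → ℤ)) |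
      ∃ u : Fin q → Fin n, StrictMono u ∧
        (x : ExteriorAlgebra ℤ (Fin n → ℤ)) = W n q u} = ⊤ := by
    apply Submodule.map_injective_of_injective hsub
    rw [Submodule.map_span, Submodule.map_subtype_top]
    have himg : (⋀[ℤ]^q (Fin n → ℤ)).subtype ''
        {x : ↥(⋀[ℤ]^q (Fin n → ℤ)) | ∃ u : Fin q → Fin n, StrictMono u ∧
          (x : ExteriorAlgebra ℤ (Fin n → ℤ)) = W n q u}
        = W n q '' {u | StrictMono u} := by
      ext y
      constructor
      · rintro ⟨x, ⟨u, hu, hx⟩, rfl⟩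
        exact ⟨u, hu, hx.symm⟩
      · rintro ⟨u, hu, rfl⟩
        exact ⟨⟨W n q u, ιMulti_range ℤ q (Set.mem_range_self _)⟩, ⟨u, hu, rfl⟩, rfl⟩
    rw [himg]
    apply le_antisymm
    · rw [Submodule.span_le]
      rintro _ ⟨u, hu, rfl⟩
      exact ιMulti_range ℤ q (Set.mem_range_self _)
    · intro z hz
      exact mem_span_W n q hz
  apply LinearMap.ext; intro x
  have hx : x ∈ Submodule.span ℤ {x : ↥(⋀[ℤ]^q (Fin n → ℤ)) |
      ∃ u : Fin q → Fin n, StrictMono u ∧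
        (x : ExteriorAlgebra ℤ (Fin n → ℤ)) = W n q u} := by
    rw [hspan]; trivial
  induction hx using Submodule.span_induction with
  | mem a ha =>
    obtain ⟨u, hu, haW⟩ := ha
    have haeq : a = ⟨ExteriorAlgebra.ιMulti ℤ q (fun j => Pi.single (u j) (1 : ℤ)),
        ExteriorAlgebra.ιMulti_range ℤ q (Set.mem_range_self _)⟩ := Subtype.ext haW
    rw [haeq, h3' u hu, hprop3 u hu]
  | zero => simp
  | add a b _ _ ha hb => rw [map_add, map_add, ha, hb]
  | smul r a _ ha => rw [map_smul, map_smul, ha]
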